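/- Let G be a second countable étale groupoid and A ⊆ G^{(0)} a measurable invariant subset (r^{-1}(A) = s^{-1}(A)). If the restricted subgroupoids G_A = s^{-1}(A) and G_{G^{(0)}\A} are both Borel amenable, then G is Borel amenable; conversely, if G is Borel amenable then so is G_A. -/
import Mathlib

open Filter Topology

/-- A (bare) topological groupoid: arrows, units, range/source, composition, inversion. -/
structure TopGroupoid where
  carrier : Type
  units : Type
  topC : TopologicalSpace carrier
  topU : TopologicalSpace units
  r : carrier → units
  s : carrier → units
  unit : units → carrier
  comp : ∀ g h : carrier, s g = r h → carrier
  inv : carrier → carrier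
  r_unit : ∀ x, r (unit x) = x
  s_unit : ∀ x, s (unit x) = x
  r_inv : ∀ g, r (inv g) = s g
  s_inv : ∀ g, s (inv g) = r g
  r_comp : ∀ g h p, r (comp g h p) = r g
  s_comp : ∀ g h p, s (comp g h p) = s h
  assoc : ∀ g h k p₁ p₂ p₃ p₄, comp (comp g h p₁) k p₂ = comp g (comp h k p₃) p₄
  unit_comp : ∀ g p, comp (unit (r g)) g p = g
  comp_unit : ∀ g p, comp g (unit (s g)) p = g
  inv_comp : ∀ g p, comp (inv g) g p = unit (s g)
  comp_inv : ∀ g p, comp g (inv g) p = unit (r g)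

attribute [instance] TopGroupoid.topC TopGroupoid.topU

/-- `G` is étale and second countable. -/
def TopGroupoid.Etale (G : TopGroupoid) : Prop :=
  T2Space G.units ∧ SecondCountableTopology G.carrier ∧
    IsLocalHomeomorph G.r ∧ IsLocalHomeomorph G.s

/-- Borel amenability of a groupoid: a sequence of Borel systems of probability measures on
the range fibers which is asymptotically invariant. -/
def TopGroupoid.BorelAmenable (G : TopGroupoid) : Prop :=
  ∃ m : ℕ → G.carrier → ℝ,
    (∀ n g, 0 ≤ m n g) ∧
    (∀ n x, ∑' g : {g : G.carrier // G.r g = x}, m n g.1 = 1) ∧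
    (∀ n, @Measurable _ _ (borel G.carrier) Real.measurableSpace
        fun g : G.carrier => m n g) ∧
    ∀ g : G.carrier,
      Tendsto (fun n => ∑' h : {h : G.carrier // G.r h = G.r g},
          |m n (G.comp (G.inv g) h.1 (by rw [G.s_inv, h.2])) - m n h.1|)
        atTop (𝓝 0)

/-- The restriction of `G` to an invariant subset `A` of the unit space. -/
def TopGroupoid.restrict (G : TopGroupoid) (A : Set G.units)
    (hA : G.r ⁻¹' A = G.s ⁻¹' A) : TopGroupoid where
  carrier := {g : G.carrier // G.s g ∈ A}
  units := {x : G.units // x ∈ A}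
  topC := inferInstance
  topU := inferInstance
  r g := ⟨G.r g.1, by have : g.1 ∈ G.s ⁻¹' A := g.2; rw [← hA] at this; exact this⟩
  s g := ⟨G.s g.1, g.2⟩
  unit x := ⟨G.unit x.1, by rw [G.s_unit]; exact x.2⟩
  comp g h p := ⟨G.comp g.1 h.1 (congrArg Subtype.val p), by rw [G.s_comp]; exact h.2⟩
  inv g := ⟨G.inv g.1, by
    rw [G.s_inv]
    have : g.1 ∈ G.s ⁻¹' A := g.2; rw [← hA] at this; exact this⟩
  r_unit x := Subtype.ext (G.r_unit x.1)
  s_unit x := Subtype.ext (G.s_unit x.1)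
  r_inv g := Subtype.ext (G.r_inv g.1)
  s_inv g := Subtype.ext (G.s_inv g.1)
  r_comp g h p := Subtype.ext (G.r_comp g.1 h.1 _)
  s_comp g h p := Subtype.ext (G.s_comp g.1 h.1 _)
  assoc g h k p₁ p₂ p₃ p₄ := Subtype.ext
    (G.assoc g.1 h.1 k.1 _ _ (congrArg Subtype.val p₃) _)
  unit_comp g p := Subtype.ext (G.unit_comp g.1 (congrArg Subtype.val p))
  comp_unit g p := Subtype.ext (G.comp_unit g.1 (congrArg Subtype.val p))
  inv_comp g p := Subtype.ext (G.inv_comp g.1 (congrArg Subtype.val p))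
  comp_inv g p := Subtype.ext (G.comp_inv g.1 (congrArg Subtype.val p))


theorem extend_borel {α : Type} [TopologicalSpace α] (S : Set α) [∀ x, Decidable (x ∈ S)]
    (hS : @MeasurableSet α (borel α) S) (f : S → ℝ)
    (hf : @Measurable _ _ (borel S) Real.measurableSpace f) :
    @Measurable α ℝ (borel α) Real.measurableSpace
      (fun x => if h : x ∈ S then f ⟨x, h⟩ else 0) := by
  letI : MeasurableSpace α := borel α
  haveI : BorelSpace α := ⟨rfl⟩
  have hf' : Measurable f := by
    have h := (Subtype.borelSpace S).measurable_eq
    rw [h]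
    exact hf
  exact Measurable.dite hf' measurable_const hS

/-- The `r`-fiber of `G` over an invariant point of `A` is equivalent to the corresponding
`r`-fiber of the restriction of `G` to `A`. -/
def fiberEquiv (G : TopGroupoid) (A : Set G.units) (hA : G.r ⁻¹' A = G.s ⁻¹' A)
    (x : (G.restrict A hA).units) :
    {h : G.carrier // G.r h = x.1} ≃
      {h : (G.restrict A hA).carrier // (G.restrict A hA).r h = x} where
  toFun k := ⟨⟨k.1, by
      have : k.1 ∈ G.r ⁻¹' A := by rw [Set.mem_preimage, k.2]; exact x.2
      rw [hA] at this; exact this⟩, Subtype.ext k.2⟩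
  invFun h := ⟨h.1.1, congrArg Subtype.val h.2⟩
  left_inv _ := rfl
  right_inv _ := rfl

/-- for a second countable étale groupoid `G` and a measurable invariant
`A ⊆ G⁰`, if the restrictions `G_A` and `G_{G⁰ \ A}` are Borel amenable then so is `G`;
conversely Borel amenability of `G` passes to `G_A`. -/
theorem stmt16 (G : TopGroupoid) (hG : G.Etale) (A : Set G.units)
    (hmeas : @MeasurableSet _ (borel G.units) A)
    (hA : G.r ⁻¹' A = G.s ⁻¹' A)
    (hA' : G.r ⁻¹' Aᶜ = G.s ⁻¹' Aᶜ) :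
    ((G.restrict A hA).BorelAmenable → (G.restrict Aᶜ hA').BorelAmenable →
      G.BorelAmenable) ∧
    (G.BorelAmenable → (G.restrict A hA).BorelAmenable) := by
  constructor
  · rintro ⟨mA, hA0, hA1, hAm, hAt⟩ ⟨mB, hB0, hB1, hBm, hBt⟩
    obtain ⟨hT2, hSC, hr, hs⟩ := hG
    refine ⟨fun n g =>
        (@dite ℝ (G.s g ∈ A) (Classical.propDecidable _) (fun h => mA n ⟨g, h⟩) (fun _ => 0)) +
        (@dite ℝ (G.s g ∈ Aᶜ) (Classical.propDecidable _) (fun h => mB n ⟨g, h⟩) (fun _ => 0)),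
        ?_, ?_, ?_, ?_⟩
    case refine_3 =>
      intro n
      refine Measurable.add ?_ ?_
      · exact @extend_borel _ _ (G.s ⁻¹' A) (fun _ => Classical.propDecidable _)
          (hs.continuous.borel_measurable hmeas) (fun g => mA n ⟨g.1, g.2⟩) (hAm n)
      · exact @extend_borel _ _ (G.s ⁻¹' Aᶜ) (fun _ => Classical.propDecidable _)
          (hs.continuous.borel_measurable hmeas.compl) (fun g => mB n ⟨g.1, g.2⟩) (hBm n)
    all_goals
      have keyA : ∀ n (z : G.carrier) (hz : G.s z ∈ A),
          (@dite ℝ (G.s z ∈ A) (Classical.propDecidable _) (fun h => mA n ⟨z, h⟩) (fun _ => 0)) +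
          (@dite ℝ (G.s z ∈ Aᶜ) (Classical.propDecidable _) (fun h => mB n ⟨z, h⟩) (fun _ => 0))
            = mA n ⟨z, hz⟩ := by
        intro n z hz
        rw [dif_pos hz, dif_neg (fun hc => hc hz), add_zero]
      have keyB : ∀ n (z : G.carrier) (hz : G.s z ∈ Aᶜ),
          (@dite ℝ (G.s z ∈ A) (Classical.propDecidable _) (fun h => mA n ⟨z, h⟩) (fun _ => 0)) +
          (@dite ℝ (G.s z ∈ Aᶜ) (Classical.propDecidable _) (fun h => mB n ⟨z, h⟩) (fun _ => 0))
            = mB n ⟨z, hz⟩ := by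
        intro n z hz
        rw [dif_neg hz, dif_pos hz, zero_add]
    case refine_1 =>
      intro n g
      refine add_nonneg ?_ ?_ <;>
        · split
          · first | exact hA0 n _ | exact hB0 n _
          · exact le_refl 0
    case refine_2 =>
      intro n x
      by_cases hx : x ∈ A
      · have hmem : ∀ k : {g : G.carrier // G.r g = x}, G.s k.1 ∈ A := by
          intro k
          have : k.1 ∈ G.r ⁻¹' A := by rw [Set.mem_preimage, k.2]; exact hx
          rwa [hA] at this
        have e1 : ∑' k : {g : G.carrier // G.r g = x},
            ((@dite ℝ (G.s k.1 ∈ A) (Classical.propDecidable _) (fun h => mA n ⟨k.1, h⟩) (fun _ => 0)) +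
             (@dite ℝ (G.s k.1 ∈ Aᶜ) (Classical.propDecidable _) (fun h => mB n ⟨k.1, h⟩) (fun _ => 0)))
            = ∑' k : {g : G.carrier // G.r g = x}, mA n ⟨k.1, hmem k⟩ :=
          tsum_congr fun k => keyA n k.1 (hmem k)
        have e2 : ∑' k : {g : G.carrier // G.r g = x}, mA n ⟨k.1, hmem k⟩ = 1 := by
          refine Eq.trans ?_ (hA1 n ⟨x, hx⟩)
          exact Equiv.tsum_eq (fiberEquiv G A hA ⟨x, hx⟩) (fun h => mA n h.1)
        exact e1.trans e2
      · have hmem : ∀ k : {g : G.carrier // G.r g = x}, G.s k.1 ∈ Aᶜ := by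
          intro k
          have : k.1 ∈ G.r ⁻¹' Aᶜ := by rw [Set.mem_preimage, k.2]; exact hx
          rwa [hA'] at this
        have e1 : ∑' k : {g : G.carrier // G.r g = x},
            ((@dite ℝ (G.s k.1 ∈ A) (Classical.propDecidable _) (fun h => mA n ⟨k.1, h⟩) (fun _ => 0)) +
             (@dite ℝ (G.s k.1 ∈ Aᶜ) (Classical.propDecidable _) (fun h => mB n ⟨k.1, h⟩) (fun _ => 0)))
            = ∑' k : {g : G.carrier // G.r g = x}, mB n ⟨k.1, hmem k⟩ :=
          tsum_congr fun k => keyB n k.1 (hmem k)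
        have e2 : ∑' k : {g : G.carrier // G.r g = x}, mB n ⟨k.1, hmem k⟩ = 1 := by
          refine Eq.trans ?_ (hB1 n ⟨x, hx⟩)
          exact Equiv.tsum_eq (fiberEquiv G Aᶜ hA' ⟨x, hx⟩) (fun h => mB n h.1)
        exact e1.trans e2
    case refine_4 =>
      intro g
      by_cases hg : G.s g ∈ A
      · have hmem : ∀ k : {h : G.carrier // G.r h = G.r g}, G.s k.1 ∈ A := by
          intro k
          have hrg : G.r g ∈ A := by
            have : g ∈ G.s ⁻¹' A := hg
            rw [← hA] at this; exact this
          have : k.1 ∈ G.r ⁻¹' A := by rw [Set.mem_preimage, k.2]; exact hrg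
          rwa [hA] at this
        have hck : ∀ (k : {h : G.carrier // G.r h = G.r g}) p,
            G.s (G.comp (G.inv g) k.1 p) ∈ A := by
          intro k p; rw [G.s_comp]; exact hmem k
        refine Tendsto.congr (fun n => ?_) (hAt ⟨g, hg⟩)
        refine Eq.trans
          ((Equiv.tsum_eq (fiberEquiv G A hA ((G.restrict A hA).r ⟨g, hg⟩)) _).symm)
          (tsum_congr fun k => ?_)
        beta_reduce
        rw [keyA n _ (hck k _), keyA n _ (hmem k)]
        rfl
      · have hg' : G.s g ∈ Aᶜ := hg
        have hmem : ∀ k : {h : G.carrier // G.r h = G.r g}, G.s k.1 ∈ Aᶜ := by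
          intro k
          have hrg : G.r g ∈ Aᶜ := by
            have : g ∈ G.s ⁻¹' Aᶜ := hg'
            rw [← hA'] at this; exact this
          have : k.1 ∈ G.r ⁻¹' Aᶜ := by rw [Set.mem_preimage, k.2]; exact hrg
          rwa [hA'] at this
        have hck : ∀ (k : {h : G.carrier // G.r h = G.r g}) p,
            G.s (G.comp (G.inv g) k.1 p) ∈ Aᶜ := by
          intro k p; rw [G.s_comp]; exact hmem k
        refine Tendsto.congr (fun n => ?_) (hBt ⟨g, hg'⟩)
        refine Eq.trans
          ((Equiv.tsum_eq (fiberEquiv G Aᶜ hA' ((G.restrict Aᶜ hA').r ⟨g, hg'⟩)) _).symm)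
          (tsum_congr fun k => ?_)
        beta_reduce
        rw [keyB n _ (hck k _), keyB n _ (hmem k)]
        rfl
  · rintro ⟨m, h0, h1, hm, ht⟩
    refine ⟨fun n g => m n g.1, fun n g => h0 n g.1, ?_, ?_, ?_⟩
    · intro n x
      exact ((Equiv.tsum_eq (fiberEquiv G A hA x)
        (fun h => m n h.1.1)).symm.trans (h1 n x.1))
    · exact fun n => (hm n).comp continuous_subtype_val.borel_measurable
    · intro g
      refine Tendsto.congr (fun n => ?_) (ht g.1)
      exact Equiv.tsum_eq (fiberEquiv G A hA ((G.restrict A hA).r g))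
        (fun h => |m n ((G.restrict A hA).comp ((G.restrict A hA).inv g) h.1
          (by rw [(G.restrict A hA).s_inv, h.2])).1 - m n h.1.1|)
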